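/- Let R be an almost Dedekind domain. Then every critical maximal ideal of R is a non-isolated point of Max(R) with the inverse topology; that is, Crit(R) is contained in the derived set of Max(R). -/

import Mathlib

def AlmostDedekind (R : Type*) [CommRing R] [IsDomain R] : Prop :=
  ∀ M : MaximalSpectrum R, IsDiscreteValuationRing (Localization.AtPrime M.asIdeal)

/-- The inverse topology on the maximal spectrum. -/
def invTop (R : Type*) [CommRing R] : TopologicalSpace (MaximalSpectrum R) :=
  .generateFrom {s | ∃ I : Ideal R, I.FG ∧ s = {M | I ≤ M.asIdeal}}

/-- The set of critical maximal ideals: `M` is critical if every finitely generated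
ideal contained in `M` is contained in the square of some maximal ideal. -/
def Crit (R : Type*) [CommRing R] : Set (MaximalSpectrum R) :=
  {M | ∀ I : Ideal R, I.FG → I ≤ M.asIdeal → ∃ N : Ideal R, N.IsMaximal ∧ I ≤ N ^ 2}

/-- In an almost Dedekind domain, every critical maximal ideal is a non-isolated
point of `Max(R)` with the inverse topology, i.e. `Crit(R)` is contained in the
derived set of `Max(R)`. -/
theorem stmt3 {R : Type*} [CommRing R] [IsDomain R] (hR : AlmostDedekind R) :
    ∀ M ∈ Crit R, ¬ @IsOpen _ (invTop R) {M} := by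
  intro M hM hopen
  -- From openness of {M}, extract a f.g. ideal I with V(I) ⊆ {M}.
  have key : ∀ U : Set (MaximalSpectrum R),
      TopologicalSpace.GenerateOpen
        {s | ∃ I : Ideal R, I.FG ∧ s = {M : MaximalSpectrum R | I ≤ M.asIdeal}} U →
      M ∈ U → ∃ I : Ideal R, I.FG ∧ I ≤ M.asIdeal ∧
        {N : MaximalSpectrum R | I ≤ N.asIdeal} ⊆ U := by
    intro U hU
    induction hU with
    | basic s hs =>
        intro hMs
        obtain ⟨I, hIfg, rfl⟩ := hs
        exact ⟨I, hIfg, hMs, le_refl _⟩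
    | univ => exact fun _ => ⟨⊥, Submodule.fg_bot, bot_le, fun _ _ => trivial⟩
    | inter s t _ _ ihs iht =>
        rintro ⟨hMs, hMt⟩
        obtain ⟨I, hIfg, hIM, hIs⟩ := ihs hMs
        obtain ⟨J, hJfg, hJM, hJt⟩ := iht hMt
        exact ⟨I ⊔ J, Submodule.FG.sup hIfg hJfg, sup_le hIM hJM,
          fun N hN => ⟨hIs (show I ≤ N.asIdeal from le_trans le_sup_left hN),
            hJt (show J ≤ N.asIdeal from le_trans le_sup_right hN)⟩⟩
    | sUnion S _ ih =>
        rintro ⟨s, hsS, hMs⟩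
        obtain ⟨I, h1, h2, h3⟩ := ih s hsS hMs
        exact ⟨I, h1, h2, fun N hN => ⟨s, hsS, h3 hN⟩⟩
  obtain ⟨I, hIfg, hIM, hsub⟩ := key _ hopen rfl
  haveI hMmax : M.asIdeal.IsMaximal := M.isMaximal
  haveI hDVR := hR M
  set A := Localization.AtPrime M.asIdeal
  set K : Ideal A := IsLocalRing.maximalIdeal A with hK
  have hmap : Ideal.map (algebraMap R A) M.asIdeal = K :=
    Localization.AtPrime.map_eq_maximalIdeal
  -- find t ∈ M with image not in K^2
  have hex : ∃ t ∈ M.asIdeal, algebraMap R A t ∉ K ^ 2 := by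
    by_contra h
    push_neg at h
    have hle : K ≤ K ^ 2 := by
      conv_lhs => rw [← hmap]
      rw [Ideal.map_le_iff_le_comap]
      intro x hx
      rw [Ideal.mem_comap]
      exact h x hx
    have hbot : K = ⊥ := by
      apply Submodule.eq_bot_of_le_smul_of_le_jacobson_bot K K
        (IsPrincipalIdealRing.principal K).fg
      · rw [Ideal.smul_eq_mul, ← pow_two]; exact hle
      · exact IsLocalRing.maximalIdeal_le_jacobson ⊥
    exact IsDiscreteValuationRing.not_a_field A hbot
  obtain ⟨t, htM, ht⟩ := hex
  -- apply criticality to I ⊔ span {t}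
  obtain ⟨N, hNmax, hN2⟩ := hM (I ⊔ Ideal.span {t})
    (Submodule.FG.sup hIfg (Submodule.fg_span_singleton t))
    (sup_le hIM ((Ideal.span_singleton_le_iff_mem _).mpr htM))
  have hIN : I ≤ N := le_trans le_sup_left (le_trans hN2 (Ideal.pow_le_self two_ne_zero))
  have hNM : N = M.asIdeal := by
    have : (⟨N, hNmax⟩ : MaximalSpectrum R) ∈ ({M} : Set (MaximalSpectrum R)) := hsub hIN
    exact congrArg MaximalSpectrum.asIdeal this
  have htM2 : t ∈ M.asIdeal ^ 2 := by
    rw [← hNM]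
    exact hN2 (le_sup_right (a := I) (Ideal.mem_span_singleton_self t))
  exact ht (by
    have := Ideal.mem_map_of_mem (algebraMap R A) htM2
    rwa [Ideal.map_pow, hmap] at this)
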